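/- Let f : G → Aut^0(G) be a group homomorphism and let g : G → G be a map satisfying g(στ) = g(σ)·f(σ)(g(τ)) for all σ, τ ∈ G. Suppose that f_{S_n}(H) ≠ 1 and that |f_{S_n}(G)| = |T|^m. If g is bijective and #g(ker(f_{S_n})) ≤ |T|^(#X_0 + 2r), then p ≤ 3. -/

import Mathlib

/-!
STATEMENT 16: Let `f : G → Aut⁰(G)` be a homomorphism and `g : G → G` a map
with `g(στ) = g(σ)·f(σ)(g(τ))`.  Suppose `f_{Sₙ}(H) ≠ 1` and
`|f_{Sₙ}(G)| = |T|^m`.  If `g` is bijective and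
`#g(ker(f_{Sₙ})) ≤ |T|^(#X_0 + 2r)`, then `p ≤ 3`.

Setting: `n ≥ 1`, `T` a nontrivial finite group, `G = Tⁿ = (Fin n → T)`.
That `f` takes values in `Aut⁰(G) = Aut(T) wr Sₙ` is encoded by
`Θ : G →* Equiv.Perm (Fin n)` (which is `f_{Sₙ}`) and `Φ σ i ∈ Aut(T)` with
`f(σ)(x)ᵢ = Φ σ i (x_{(Θ σ)⁻¹ i})`.  `p` is a prime dividing `|T|`, each
`P i ≤ T` has order `p`, and `H = P⁽¹⁾ × ⋯ × P⁽ⁿ⁾ ≤ G`.  Under the action of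
`f_{Sₙ}(H)` on `{1, …, n}` (i.e. `i ↦ Θ σ i` for `σ ∈ H`), `X_0` is the set
of fixed points and `X 1, …, X r` are the orbits of size `> 1` (pairwise
distinct orbits covering all non-fixed points).  `m` is the rank of the
elementary abelian `p`-group `f_{Sₙ}(H) = Θ(H)`, expressed by an isomorphism
with `Fin m → Multiplicative (ZMod p)`.
-/

lemma aux_add_le_pow (p j : ℕ) (hp : 2 ≤ p) (hj : 1 ≤ j) : j + (p - 1) ≤ p ^ j := by
  induction j with
  | zero => omega
  | succ j ih =>
    rcases Nat.lt_or_ge 1 (j + 1) with h | h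
    · have hj1 : 1 ≤ j := by omega
      have h2 := ih hj1
      calc j + 1 + (p - 1) ≤ 2 * (j + (p - 1)) := by omega
        _ ≤ p * p ^ j := Nat.mul_le_mul hp h2
        _ = p ^ (j + 1) := by ring
    · have : j = 0 := by omega
      subst this
      simpa using by omega

theorem p_le_three_of_regular
    (n : ℕ) (hn : 1 ≤ n) (T : Type*) [Group T] [Finite T] [Nontrivial T]
    (f : (Fin n → T) →* MulAut (Fin n → T))
    (Θ : (Fin n → T) →* Equiv.Perm (Fin n))
    (Φ : (Fin n → T) → Fin n → MulAut T)
    (hfΘΦ : ∀ (σ : Fin n → T) (x : Fin n → T) (i : Fin n),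
      f σ x i = Φ σ i (x ((Θ σ)⁻¹ i)))
    (g : (Fin n → T) → (Fin n → T))
    (hg : ∀ σ τ : Fin n → T, g (σ * τ) = g σ * f σ (g τ))
    (p : ℕ) (hp : p.Prime) (hpT : p ∣ Nat.card T)
    (P : Fin n → Subgroup T) (hP : ∀ i, Nat.card (P i) = p)
    (H : Subgroup (Fin n → T)) (hH : H = Subgroup.pi Set.univ P)
    (X0 : Set (Fin n)) (hX0 : X0 = {i : Fin n | ∀ σ ∈ H, Θ σ i = i})
    (r : ℕ) (X : Fin r → Set (Fin n))
    (hXorb : ∀ k, ∃ i₀ ∈ X k, X k = {j : Fin n | ∃ σ ∈ H, Θ σ i₀ = j})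
    (hXsize : ∀ k, 1 < Nat.card (X k))
    (hXinj : Function.Injective X)
    (hXcover : ∀ i : Fin n, i ∉ X0 → ∃ k, i ∈ X k)
    (m : ℕ)
    (hrank : Nonempty ((Subgroup.map Θ H) ≃* (Fin m → Multiplicative (ZMod p))))
    (hHne : Subgroup.map Θ H ≠ ⊥)
    (hrange : Nat.card Θ.range = Nat.card T ^ m)
    (hgbij : Function.Bijective g)
    (hbound : Nat.card (g '' (Θ.ker : Set (Fin n → T))) ≤
      Nat.card T ^ (Nat.card X0 + 2 * r)) :
    p ≤ 3 := by
  classical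
  obtain ⟨e⟩ := hrank
  set K := Subgroup.map Θ H with hK
  haveI : NeZero p := ⟨hp.pos.ne'⟩
  -- K is commutative
  have hcomm : ∀ a b : K, a * b = b * a := fun a b =>
    e.injective (by rw [map_mul, map_mul, mul_comm])
  -- card K = p ^ m
  have hcardK : Nat.card K = p ^ m := by
    rw [Nat.card_congr e.toEquiv]
    simp [Nat.card_pi, Nat.card_zmod]
  -- fixed points
  have hfix : ∀ (a : K) (i : Fin n), i ∈ X0 → (a : Equiv.Perm (Fin n)) i = i := by
    rintro ⟨a, ha⟩ i hi
    obtain ⟨σ, hσ, rfl⟩ := ha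
    rw [hX0] at hi
    exact hi σ hσ
  -- base points of orbits
  choose i₀ hi₀mem hi₀orb using hXorb
  have horb : ∀ k, X k = MulAction.orbit K (i₀ k) := by
    intro k
    rw [hi₀orb k]
    ext j
    constructor
    · rintro ⟨σ, hσ, rfl⟩
      exact ⟨⟨Θ σ, σ, hσ, rfl⟩, rfl⟩
    · rintro ⟨⟨a, σ, hσ, rfl⟩, rfl⟩
      exact ⟨σ, hσ, rfl⟩
  -- smul of K on Fin n is application
  have hsmul : ∀ (a : K) (i : Fin n), a • i = (a : Equiv.Perm (Fin n)) i := fun a i => rfl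
  -- injection K → ∀ k, X k
  have hmemorb : ∀ (a : K) (k : Fin r), a • i₀ k ∈ X k := by
    intro a k
    rw [horb k]
    exact MulAction.mem_orbit _ a
  have hinj : Function.Injective (fun (a : K) => fun k => (⟨a • i₀ k, hmemorb a k⟩ : X k)) := by
    intro a b hab
    have h1 : ∀ k, a • i₀ k = b • i₀ k := fun k => by
      have := congrFun hab k
      exact Subtype.ext_iff.mp this
    apply Subtype.ext
    apply Equiv.ext
    intro i
    by_cases hi : i ∈ X0
    · rw [hfix a i hi, hfix b i hi]
    · obtain ⟨k, hk⟩ := hXcover i hi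
      rw [horb k] at hk
      obtain ⟨c, rfl⟩ := hk
      have : a • c • i₀ k = b • c • i₀ k := by
        rw [smul_smul, smul_smul, hcomm a c, hcomm b c, ← smul_smul, ← smul_smul,
          h1 k]
      simpa [hsmul] using this
  -- p ^ m ≤ ∏ card (X k)
  have hle1 : p ^ m ≤ ∏ k, Nat.card (X k) := by
    rw [← hcardK, ← Nat.card_pi]
    exact Nat.card_le_card_of_injective _ hinj
  -- each orbit card divides p ^ m
  have hdvd : ∀ k, Nat.card (X k) ∣ p ^ m := by
    intro k
    rw [horb k, ← hcardK,
      Nat.card_congr (MulAction.orbitEquivQuotientStabilizer K (i₀ k))]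
    exact Subgroup.card_quotient_dvd_card _
  have hXpow : ∀ k, ∃ j, 1 ≤ j ∧ Nat.card (X k) = p ^ j := by
    intro k
    obtain ⟨j, hj, hjeq⟩ := (Nat.dvd_prime_pow hp).mp (hdvd k)
    refine ⟨j, ?_, hjeq⟩
    rcases Nat.eq_zero_or_pos j with rfl | h
    · rw [pow_zero] at hjeq; have := hXsize k; omega
    · exact h
  choose a ha1 ha2 using hXpow
  -- m ≤ ∑ a k
  have hle2 : m ≤ ∑ k, a k := by
    have : p ^ m ≤ p ^ (∑ k, a k) := by
      calc p ^ m ≤ ∏ k, Nat.card (X k) := hle1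
        _ = ∏ k, p ^ a k := by simp_rw [ha2]
        _ = p ^ (∑ k, a k) := Finset.prod_pow_eq_pow_sum _ _ _
    exact (Nat.pow_le_pow_iff_right hp.one_lt).mp this
  -- disjointness: X k doesn't meet X0
  have hdisj0 : ∀ k, ∀ i ∈ X k, i ∉ X0 := by
    intro k i hik hi0
    have hXk : X k = {i} := by
      have hio : i ∈ MulAction.orbit K (i₀ k) := (horb k) ▸ hik
      have : MulAction.orbit K (i₀ k) = MulAction.orbit K i :=
        MulAction.orbit_eq_iff.mpr (MulAction.mem_orbit_symm.mp hio)
      rw [horb k, this]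
      ext j
      simp only [MulAction.mem_orbit_iff, Set.mem_singleton_iff]
      constructor
      · rintro ⟨c, rfl⟩
        rw [hsmul, hfix c i hi0]
      · rintro rfl
        exact ⟨1, one_smul _ _⟩
    have := hXsize k
    rw [hXk] at this
    simp at this
  -- disjointness of orbits
  have hdisjkl : ∀ k l : Fin r, k ≠ l → ∀ i, i ∈ X k → i ∉ X l := by
    intro k l hkl i hik hil
    apply hkl
    apply hXinj
    rw [horb k, horb l]
    rw [horb k] at hik; rw [horb l] at hil
    exact (MulAction.orbit_eq_iff.mpr (MulAction.mem_orbit_symm.mp hik)).trans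
      (MulAction.orbit_eq_iff.mpr hil)
  -- counting: card X0 + ∑ card (X k) ≤ n
  have hcount : Nat.card X0 + ∑ k, Nat.card (X k) ≤ n := by
    have hF : Function.Injective
        (Sum.elim (fun x : X0 => (x : Fin n))
          (fun x : (Σ k : Fin r, X k) => (x.2 : Fin n))) := by
      rintro (x | ⟨k, x⟩) (y | ⟨l, y⟩) h <;> simp only [Sum.elim_inl, Sum.elim_inr] at h
      · exact congrArg Sum.inl (Subtype.ext h)
      · exact absurd x.2 (h ▸ hdisj0 l y y.2)
      · exact absurd y.2 ((h.symm) ▸ hdisj0 k x x.2)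
      · rcases eq_or_ne k l with rfl | hkl
        · exact congrArg Sum.inr (Sigma.ext rfl (by simpa using Subtype.ext h))
        · exact absurd (h ▸ y.2) (by simpa [h] using hdisjkl k l hkl x x.2)
    have := Nat.card_le_card_of_injective _ hF
    rw [Nat.card_sum, Nat.card_eq_fintype_card (α := Fin n), Fintype.card_fin] at this
    have hsig : Nat.card (Σ k : Fin r, X k) = ∑ k, Nat.card (X k) := by
      simp [Nat.card_eq_fintype_card, Fintype.card_sigma]
    omega
  -- kernel cardinality
  set t := Nat.card T with ht
  have ht2 : 2 ≤ t := Finite.one_lt_card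
  have hcardG : Nat.card (Fin n → T) = t ^ n := by
    rw [Nat.card_pi]; simp [ht]
  have hker : Nat.card Θ.ker = t ^ (n - m) ∧ m ≤ n := by
    have h1 : Nat.card (Fin n → T) = Nat.card Θ.range * Nat.card Θ.ker := by
      rw [Subgroup.card_eq_card_quotient_mul_card_subgroup Θ.ker,
        Nat.card_congr (QuotientGroup.quotientKerEquivRange Θ).toEquiv]
    rw [hcardG, hrange] at h1
    have hmn : m ≤ n := by
      by_contra hcon
      push_neg at hcon
      have : t ^ n < t ^ m := Nat.pow_lt_pow_right ht2 hcon
      have hkpos : 1 ≤ Nat.card Θ.ker := Nat.one_le_iff_ne_zero.mpr Nat.card_pos.ne'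
      nlinarith
    constructor
    · have : t ^ m * t ^ (n - m) = t ^ m * Nat.card Θ.ker := by
        rw [← pow_add]
        rw [Nat.add_sub_cancel' hmn]
        exact h1
      exact (Nat.eq_of_mul_eq_mul_left (by positivity) this).symm
    · exact hmn
  obtain ⟨hkercard, hmn⟩ := hker
  -- the bound
  have hbound2 : n - m ≤ Nat.card X0 + 2 * r := by
    rw [Nat.card_image_of_injective hgbij.injective, SetLike.coe_sort_coe,
      hkercard] at hbound
    exact (Nat.pow_le_pow_iff_right ht2).mp hbound
  -- r ≥ 1
  have hr : 1 ≤ r := by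
    obtain ⟨x, hx, hx1⟩ := K.bot_or_exists_ne_one.resolve_left hHne
    have : ∃ i, x i ≠ i := by
      by_contra hcon
      push_neg at hcon
      exact hx1 (Equiv.ext hcon)
    obtain ⟨i, hi⟩ := this
    have hi0 : i ∉ X0 := fun h => hi (hfix ⟨x, hx⟩ i h)
    obtain ⟨k, _⟩ := hXcover i hi0
    exact k.pos
  -- final arithmetic
  have hsum1 : ∑ k, (a k + (p - 1)) ≤ ∑ k, Nat.card (X k) :=
    Finset.sum_le_sum fun k _ => (ha2 k) ▸ aux_add_le_pow p (a k) hp.two_le (ha1 k)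
  rw [Finset.sum_add_distrib, Finset.sum_const, Finset.card_univ, Fintype.card_fin,
    smul_eq_mul] at hsum1
  have hsum2 : ∑ k, Nat.card (X k) ≤ m + 2 * r := by omega
  have : r * (p - 1) ≤ r * 2 := by omega
  have := Nat.le_of_mul_le_mul_left this (by omega)
  omega
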